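/- Fix s ≥ 0 and suppose M^s(Σ^∞) > 0. Then there exist a Borel measure μ on Σ^∞ with 0 < μ(Σ^∞) < ∞ and a constant c > 0 such that μ(C_u) ≤ c·φ^s(T_u) for every u ∈ Σ^*. -/

import Mathlib

open Filter MeasureTheory Set
open scoped ENNReal NNReal Topology

noncomputable section

namespace MoranPaper


/-- `ℝ^d` as a Euclidean space. -/
abbrev Rd (d : ℕ) := EuclideanSpace ℝ (Fin d)

theorem isHermitian_transpose_mul_self {d : ℕ} (T : Matrix (Fin d) (Fin d) ℝ) :
    (Matrix.transpose T * T).IsHermitian := by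
  simpa using Matrix.isHermitian_conjTranspose_mul_self T

/-- The singular values of a `d × d` real matrix, in decreasing order, `0`-indexed:
`sv d T 0 = α₁(T)` is the largest singular value, `sv d T (d-1) = α_d(T)` the smallest.
(Junk value `0` for indices `≥ d`.) -/
def sv (d : ℕ) (T : Matrix (Fin d) (Fin d) ℝ) (m : ℕ) : ℝ :=
  if h : m < d then
    (fun j => Real.sqrt ((isHermitian_transpose_mul_self T).eigenvalues j))
      (Tuple.sort
        (fun j => Real.sqrt ((isHermitian_transpose_mul_self T).eigenvalues j))
        (Fin.rev ⟨m, h⟩))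
  else 0

/-- The singular value function `φ^s(T)`: for `0 < s ≤ d` with `m - 1 < s ≤ m`,
`φ^s(T) = α₁(T)⋯α_{m-1}(T)·α_m(T)^{s-m+1}`; `φ^0(T) = 1`; for `s > d`,
`φ^s(T) = (α₁(T)⋯α_d(T))^{s/d} = |det T|^{s/d}`. -/
def phi (d : ℕ) (T : Matrix (Fin d) (Fin d) ℝ) (s : ℝ) : ℝ :=
  if s ≤ 0 then 1
  else if s ≤ d then
    (∏ i ∈ Finset.range (⌈s⌉₊ - 1), sv d T i) * sv d T (⌈s⌉₊ - 1) ^ (s - ⌈s⌉₊ + 1)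
  else (∏ i ∈ Finset.range d, sv d T i) ^ (s / d)

variable (n : ℕ → ℕ)

/-- Finite words of length `k`: `Σ^k` (`0`-indexed levels: position `i` uses alphabet `Fin (n i)`). -/
abbrev Word (k : ℕ) := ∀ i : Fin k, Fin (n i)

/-- All finite words: `Σ^*`. -/
abbrev FinWord := Σ k : ℕ, Word n k

/-- Infinite words: `Σ^∞`. -/
abbrev InfWord := ∀ k : ℕ, Fin (n k)

/-- Drop the last letter of a word: `u ↦ u⁻`. -/
def wInit {k : ℕ} (u : Word n (k + 1)) : Word n k := fun i => u i.castSucc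

/-- The initial word `u|k` of an infinite word `u`. -/
def wTake (u : InfWord n) (k : ℕ) : Word n k := fun i => u i

/-- The cylinder `C_u ⊆ Σ^∞` of a finite word `u`. -/
def cylinder {k : ℕ} (u : Word n k) : Set (InfWord n) := {v | ∀ i : Fin k, v i = u i}

/-- The length of the maximal common initial word `u ∧ v` of two infinite words. -/
def meetLen (u v : InfWord n) : ℕ := sInf {k : ℕ | u k ≠ v k}

variable {d : ℕ} (T : ∀ k : ℕ, Fin (n k) → Matrix (Fin d) (Fin d) ℝ)

/-- `T_u = T_{1,u_1} T_{2,u_2} ⋯ T_{k,u_k}` for a finite word `u`. -/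
def Tword {k : ℕ} (u : Word n k) : Matrix (Fin d) (Fin d) ℝ :=
  (List.ofFn fun i : Fin k => T i (u i)).prod

/-- The sum `Σ_{u ∈ A} φ^s(T_u)` over a set of finite words, valued in `ℝ≥0∞`. -/
def covSum (s : ℝ) (A : Set (FinWord n)) : ℝ≥0∞ :=
  ∑' u : A, ENNReal.ofReal (phi d (Tword n T u.1.2) s)

/-- The premeasure `M^s_{(k)}(G)`: infimum of `Σ_u φ^s(T_u)` over covers of `G` by cylinders
of words of length at least `k`. -/
def Mk (s : ℝ) (k : ℕ) (G : Set (InfWord n)) : ℝ≥0∞ :=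
  ⨅ (A : Set (FinWord n)) (_ : ∀ u ∈ A, k ≤ u.1)
    (_ : G ⊆ ⋃ u ∈ A, cylinder n u.2), covSum n T s A

/-- The net measure `M^s(G) = lim_{k → ∞} M^s_{(k)}(G)` (the limit of the nondecreasing
sequence `M^s_{(k)}(G)`, i.e. its supremum). -/
def Mnet (s : ℝ) (G : Set (InfWord n)) : ℝ≥0∞ := ⨆ k : ℕ, Mk n T s k G

/-- The critical value `s_A = inf {s : M^s(Σ^∞) = 0}`. -/
def sA : ℝ := sInf {s : ℝ | Mnet n T s univ = 0}

/-- The cut-set `Σ^*(s, ε)`: words `u` (of positive length) with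
`α_m(T_{u⁻}) > ε` and `α_m(T_u) ≤ ε`, where `m - 1 < s ≤ m`. -/
def cutSet (s ε : ℝ) : Set (FinWord n) :=
  {w | ∃ (k : ℕ) (u : Word n (k + 1)), w = ⟨k + 1, u⟩ ∧
    ε < sv d (Tword n T (wInit n u)) (⌈s⌉₊ - 1) ∧ sv d (Tword n T u) (⌈s⌉₊ - 1) ≤ ε}

/-- `Σ_{u ∈ Σ^*(s,ε)} φ^s(T_u)`. -/
def cutSum (s ε : ℝ) : ℝ≥0∞ := covSum n T s (cutSet n T s ε)

/-- The critical value `s^* = inf {s > 0 : limsup_{ε → 0⁺} Σ_{u ∈ Σ^*(s,ε)} φ^s(T_u) < ∞}`. -/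
def sStar : ℝ :=
  sInf {s : ℝ | 0 < s ∧ limsup (fun ε : ℝ => cutSum n T s ε) (𝓝[>] 0) < ⊤}

/-- `N_ε(A)`: the smallest number of sets of diameter at most `ε` needed to cover `A`
(`∞` if there is no such finite cover), valued in `ℝ≥0∞`. -/
def Ncov {X : Type*} [PseudoEMetricSpace X] (A : Set X) (ε : ℝ) : ℝ≥0∞ :=
  ⨅ (C : Finset (Set X)) (_ : A ⊆ ⋃ c ∈ C, c)
    (_ : ∀ c ∈ C, EMetric.diam c ≤ ENNReal.ofReal ε), (C.card : ℝ≥0∞)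

/-- The upper box-counting dimension: `limsup_{ε → 0⁺} log N_ε(A) / (- log ε)`. -/
def ubDim {X : Type*} [PseudoEMetricSpace X] (A : Set X) : ℝ :=
  limsup (fun ε : ℝ => Real.log (Ncov A ε).toReal / (-Real.log ε)) (𝓝[>] 0)

/-- The lower box-counting dimension: `liminf_{ε → 0⁺} log N_ε(A) / (- log ε)`. -/
def lbDim {X : Type*} [PseudoEMetricSpace X] (A : Set X) : ℝ :=
  liminf (fun ε : ℝ => Real.log (Ncov A ε).toReal / (-Real.log ε)) (𝓝[>] 0)

section Moran

variable (ω : ∀ k : ℕ, Word n (k + 1) → Rd d)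

/-- The affine map `x ↦ T_{k, u_k} x + ω_u` determined by the last letter of `u` and the
translation attached to `u`. -/
def stepMap (k : ℕ) (u : Word n (k + 1)) : Rd d → Rd d :=
  fun x => Matrix.toEuclideanLin (T k (u (Fin.last k))) x + ω k u

/-- The composition `Ψ_u = Ψ_{u_1} ∘ ⋯ ∘ Ψ_{u_k}`, where `Ψ_{u_j}(x) = T_{j,u_j} x + ω_{u|j}`. -/
def PsiW : ∀ k : ℕ, Word n k → Rd d → Rd d
  | 0, _ => id
  | (k + 1), u => PsiW k (wInit n u) ∘ stepMap n T ω k u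

/-- The basic set `J_u = Ψ_u(J)`. -/
def Ju (J : Set (Rd d)) (k : ℕ) (u : Word n k) : Set (Rd d) := PsiW n T ω k u '' J

/-- The self-affine Moran set `E = ⋂_{k ≥ 1} ⋃_{u ∈ Σ^k} J_u`. -/
def Eset (J : Set (Rd d)) : Set (Rd d) :=
  ⋂ k : ℕ, ⋃ u : Word n (k + 1), Ju n T ω J (k + 1) u

/-- The Moran structure conditions: `J` is compact with nonempty interior, each `J_{ui}` is a
subset of `J_u`, and the maximal diameter of level-`k` basic sets tends to `0`. -/
def IsMoran (J : Set (Rd d)) : Prop :=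
  IsCompact J ∧ (interior J).Nonempty ∧
    (∀ (k : ℕ) (u : Word n (k + 1)), Ju n T ω J (k + 1) u ⊆ Ju n T ω J k (wInit n u)) ∧
    Tendsto (fun k : ℕ => ⨆ u : Word n k, EMetric.diam (Ju n T ω J k u)) atTop (𝓝 0)

/-- The standing assumptions on the matrices: each `T_{k,j}` is nonsingular, and
`0 < α₋ ≤ α₊ < 1` where `α₋ = inf α_d(T_{k,j})` and `α₊ = sup α₁(T_{k,j})`. -/
def GoodMatrices : Prop :=
  (∀ (k : ℕ) (j : Fin (n k)), (T k j).det ≠ 0) ∧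
    ∃ am ap : ℝ, 0 < am ∧ ap < 1 ∧
      ∀ (k : ℕ) (j : Fin (n k)), am ≤ sv d (T k j) (d - 1) ∧ sv d (T k j) 0 ≤ ap

end Moran



/-! ### Auxiliary machinery for the Frostman-type lemma -/

section FrostmanAux

variable {n : ℕ → ℕ}

/-- Append one letter to a finite word. -/
def child {k : ℕ} (v : Word n k) (i : Fin (n k)) : Word n (k + 1) := Fin.snoc v i

@[simp] lemma child_castSucc {k : ℕ} (v : Word n k) (i : Fin (n k)) (i' : Fin k) :
    child v i i'.castSucc = v i' := by simp [child]

@[simp] lemma child_last {k : ℕ} (v : Word n k) (i : Fin (n k)) :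
    child v i (Fin.last k) = i := by simp [child]

lemma wInit_child {k : ℕ} (v : Word n k) (i : Fin (n k)) : wInit n (child v i) = v := by
  funext i'; simp [wInit, child]

lemma mem_cylinder {k : ℕ} {v : Word n k} {x : InfWord n} :
    x ∈ cylinder n v ↔ ∀ i : Fin k, x i = v i := Iff.rfl

lemma cylinder_child_subset {k : ℕ} (v : Word n k) (i : Fin (n k)) :
    cylinder n (child v i) ⊆ cylinder n v := by
  intro x hx i'
  have h := hx i'.castSucc
  rw [child_castSucc] at h
  simpa using h

lemma mem_cylinder_child {k : ℕ} {v : Word n k} {x : InfWord n} (hx : x ∈ cylinder n v) :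
    x ∈ cylinder n (child v (x k)) := by
  intro i
  refine Fin.lastCases ?_ ?_ i
  · simp
  · intro i'
    rw [child_castSucc]
    simpa using hx i'

lemma cylinder_subset_iUnion_child {k : ℕ} (v : Word n k) :
    cylinder n v ⊆ ⋃ i : Fin (n k), cylinder n (child v i) := fun x hx =>
  Set.mem_iUnion.mpr ⟨x k, mem_cylinder_child hx⟩

lemma cylinder_nonempty (hn : ∀ k, 2 ≤ n k) {k : ℕ} (v : Word n k) :
    (cylinder n v).Nonempty := by
  refine ⟨fun m => if h : m < k then v ⟨m, h⟩ else ⟨0, by have := hn m; omega⟩, fun i => ?_⟩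
  simp only [dif_pos i.isLt, Fin.eta]

/-- If `x` lies in two cylinders, the longer one is contained in the shorter one. -/
lemma cylinder_subset_of_mem {j K : ℕ} (hjK : j ≤ K) {v : Word n j} {u : Word n K}
    {x : InfWord n} (hxu : x ∈ cylinder n u) (hxv : x ∈ cylinder n v) :
    cylinder n u ⊆ cylinder n v := by
  intro y hy i
  have hi : (i : ℕ) < K := lt_of_lt_of_le i.isLt hjK
  have h1 : y i = u ⟨i, hi⟩ := hy ⟨i, hi⟩
  have h2 : x i = u ⟨i, hi⟩ := hxu ⟨i, hi⟩
  rw [h1, ← h2]; exact hxv i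

lemma word_eq_of_common_point {j : ℕ} {u v : Word n j} {x : InfWord n}
    (hxu : x ∈ cylinder n u) (hxv : x ∈ cylinder n v) : u = v :=
  funext fun i => by rw [← hxu i, hxv i]

lemma cylinder_zero (v : Word n 0) : cylinder n v = Set.univ :=
  Set.eq_univ_of_forall fun _ i => i.elim0

lemma cylinder_isOpen {j : ℕ} (v : Word n j) : IsOpen (cylinder n v) := by
  have : cylinder n v = ⋂ i : Fin j, (fun x : InfWord n => x i) ⁻¹' {v i} := by
    ext x; simp [mem_cylinder, Set.mem_iInter]
  rw [this]
  exact isOpen_iInter_of_finite fun i =>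
    (continuous_apply (i : ℕ)).isOpen_preimage _ (isOpen_discrete _)

lemma cylinder_measurableSet {j : ℕ} (v : Word n j) : MeasurableSet (cylinder n v) := by
  have : cylinder n v = ⋂ i : Fin j, (fun x : InfWord n => x i) ⁻¹' {v i} := by
    ext x; simp [mem_cylinder, Set.mem_iInter]
  rw [this]
  exact MeasurableSet.iInter fun i =>
    (measurable_pi_apply (i : ℕ)) (measurableSet_singleton (v i))

/-! ### Sums of weights over sets of finite words -/

/-- The sum of a weight function over a set of finite words. -/
def qSum (q : FinWord n → ℝ≥0∞) (A : Set (FinWord n)) : ℝ≥0∞ := ∑' u : A, q u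

lemma qSum_singleton (q : FinWord n → ℝ≥0∞) (w : FinWord n) : qSum q {w} = q w :=
  tsum_singleton w q

lemma qSum_empty (q : FinWord n → ℝ≥0∞) : qSum q ∅ = 0 := by simp [qSum, tsum_empty]

lemma qSum_eq_indicator (q : FinWord n → ℝ≥0∞) (A : Set (FinWord n)) :
    qSum q A = ∑' w, A.indicator q w := tsum_subtype A q

lemma qSum_iUnion_le {ι : Type*} [Countable ι] (q : FinWord n → ℝ≥0∞)
    (A : ι → Set (FinWord n)) : qSum q (⋃ i, A i) ≤ ∑' i, qSum q (A i) := by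
  simp only [qSum_eq_indicator]
  rw [ENNReal.tsum_comm]
  refine ENNReal.tsum_le_tsum fun w => ?_
  by_cases h : w ∈ ⋃ i, A i
  · obtain ⟨i0, hi0⟩ := Set.mem_iUnion.mp h
    rw [Set.indicator_of_mem h]
    calc q w = (A i0).indicator q w := (Set.indicator_of_mem hi0 q).symm
      _ ≤ _ := ENNReal.le_tsum i0
  · rw [Set.indicator_of_notMem h]; exact zero_le

lemma qSum_iUnion_disjoint {ι : Type*} [Fintype ι] (q : FinWord n → ℝ≥0∞)
    {A : ι → Set (FinWord n)} (hdis : Pairwise (Function.onFun Disjoint A)) :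
    qSum q (⋃ i, A i) = ∑ i, qSum q (A i) := by
  simp only [qSum_eq_indicator]
  have h1 : ∀ w, (⋃ i, A i).indicator q w = ∑ i, (A i).indicator q w := by
    intro w
    by_cases h : w ∈ ⋃ i, A i
    · obtain ⟨i0, hi0⟩ := Set.mem_iUnion.mp h
      rw [Set.indicator_of_mem h]
      rw [Finset.sum_eq_single_of_mem i0 (Finset.mem_univ i0)]
      · exact (Set.indicator_of_mem hi0 q).symm
      · intro i _ hne
        refine Set.indicator_of_notMem (fun hw => ?_) q
        exact (hdis hne).ne_of_mem hw hi0 rfl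
    · rw [Set.indicator_of_notMem h]
      refine (Finset.sum_eq_zero fun i _ => ?_).symm
      exact Set.indicator_of_notMem (fun hw => h (Set.mem_iUnion.mpr ⟨i, hw⟩)) q
  calc ∑' w, (⋃ i, A i).indicator q w
      = ∑' w, ∑' i, (A i).indicator q w := by
        refine tsum_congr fun w => ?_
        rw [h1 w, tsum_fintype]
    _ = ∑' i, ∑' w, (A i).indicator q w := ENNReal.tsum_comm
    _ = ∑ i, ∑' w, (A i).indicator q w := tsum_fintype _

lemma qSum_split (q : FinWord n → ℝ≥0∞) {A B : Set (FinWord n)} (h : B ⊆ A) :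
    qSum q A = qSum q B + qSum q (A \ B) := by
  simp only [qSum_eq_indicator]
  rw [← ENNReal.tsum_add]
  refine tsum_congr fun w => ?_
  by_cases hB : w ∈ B
  · rw [Set.indicator_of_mem (h hB), Set.indicator_of_mem hB,
      Set.indicator_of_notMem (fun hw => hw.2 hB), add_zero]
  · by_cases hA : w ∈ A
    · rw [Set.indicator_of_mem hA, Set.indicator_of_notMem hB,
        Set.indicator_of_mem (Set.mem_diff w |>.mpr ⟨hA, hB⟩), zero_add]
    · rw [Set.indicator_of_notMem hA, Set.indicator_of_notMem hB,
        Set.indicator_of_notMem (fun hw => hA hw.1), add_zero]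

/-! ### The general cover premeasure -/

/-- The general premeasure given by infimum over covers by cylinders of words of length
at least `k`, of the sum of an arbitrary weight function. -/
def mu0 (q : FinWord n → ℝ≥0∞) (k : ℕ) (G : Set (InfWord n)) : ℝ≥0∞ :=
  ⨅ (A : Set (FinWord n)) (_ : ∀ u ∈ A, k ≤ u.1)
    (_ : G ⊆ ⋃ u ∈ A, cylinder n u.2), qSum q A

lemma mu0_le_of {q : FinWord n → ℝ≥0∞} {k : ℕ} {G : Set (InfWord n)}
    {A : Set (FinWord n)} (h1 : ∀ u ∈ A, k ≤ u.1)
    (h2 : G ⊆ ⋃ u ∈ A, cylinder n u.2) : mu0 q k G ≤ qSum q A :=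
  iInf_le_of_le A (iInf_le_of_le h1 (iInf_le _ h2))

lemma exists_cover_of_lt {q : FinWord n → ℝ≥0∞} {k : ℕ} {G : Set (InfWord n)} {c : ℝ≥0∞}
    (h : mu0 q k G < c) : ∃ A : Set (FinWord n), (∀ u ∈ A, k ≤ u.1) ∧
      (G ⊆ ⋃ u ∈ A, cylinder n u.2) ∧ qSum q A < c := by
  simp only [mu0, iInf_lt_iff] at h
  obtain ⟨A, h1, h2, h3⟩ := h
  exact ⟨A, h1, h2, h3⟩

lemma mu0_mono_set {q : FinWord n → ℝ≥0∞} {k : ℕ} {G G' : Set (InfWord n)} (h : G ⊆ G') :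
    mu0 q k G ≤ mu0 q k G' :=
  le_iInf fun A => le_iInf fun h1 => le_iInf fun h2 => mu0_le_of h1 (h.trans h2)

lemma mu0_mono_k {q : FinWord n → ℝ≥0∞} {G : Set (InfWord n)} {k k' : ℕ} (h : k ≤ k') :
    mu0 q k G ≤ mu0 q k' G :=
  le_iInf fun A => le_iInf fun h1 => le_iInf fun h2 =>
    mu0_le_of (fun u hu => h.trans (h1 u hu)) h2

lemma mu0_empty (q : FinWord n → ℝ≥0∞) (k : ℕ) : mu0 q k (∅ : Set (InfWord n)) = 0 := by
  refine le_antisymm ?_ zero_le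
  have := mu0_le_of (q := q) (k := k) (G := (∅ : Set (InfWord n))) (A := ∅)
    (fun u hu => absurd hu (Set.notMem_empty u)) (Set.empty_subset _)
  simpa [qSum_empty] using this

lemma mu0_iUnion_le {ι : Type*} [Countable ι] (q : FinWord n → ℝ≥0∞) (k : ℕ)
    (G : ι → Set (InfWord n)) : mu0 q k (⋃ i, G i) ≤ ∑' i, mu0 q k (G i) := by
  by_cases htop : ∑' i, mu0 q k (G i) = ⊤
  · rw [htop]; exact le_top
  refine ENNReal.le_of_forall_pos_le_add fun ε hε _ => ?_
  obtain ⟨ε', hε'pos, hε'sum⟩ :=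
    ENNReal.exists_pos_sum_of_countable (ε := (ε : ℝ≥0∞)) (by exact_mod_cast hε.ne') ι
  have hchoice : ∀ i, ∃ A : Set (FinWord n), (∀ u ∈ A, k ≤ u.1) ∧
      (G i ⊆ ⋃ u ∈ A, cylinder n u.2) ∧ qSum q A < mu0 q k (G i) + ε' i := by
    intro i
    refine exists_cover_of_lt (ENNReal.lt_add_right ?_ ?_)
    · exact ne_top_of_le_ne_top htop (ENNReal.le_tsum i)
    · exact_mod_cast (hε'pos i).ne'
  choose A hA1 hA2 hA3 using hchoice
  have hcov : (⋃ i, G i) ⊆ ⋃ u ∈ ⋃ i, A i, cylinder n u.2 := by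
    intro x hx
    obtain ⟨i, hi⟩ := Set.mem_iUnion.mp hx
    obtain ⟨u, hu, hxu⟩ := Set.mem_iUnion₂.mp (hA2 i hi)
    exact Set.mem_iUnion₂.mpr ⟨u, Set.mem_iUnion.mpr ⟨i, hu⟩, hxu⟩
  calc mu0 q k (⋃ i, G i) ≤ qSum q (⋃ i, A i) := by
        refine mu0_le_of ?_ hcov
        intro u hu
        obtain ⟨i, hi⟩ := Set.mem_iUnion.mp hu
        exact hA1 i u hi
    _ ≤ ∑' i, qSum q (A i) := qSum_iUnion_le q A
    _ ≤ ∑' i, (mu0 q k (G i) + ε' i) := ENNReal.tsum_le_tsum fun i => (hA3 i).le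
    _ = (∑' i, mu0 q k (G i)) + ∑' i, (ε' i : ℝ≥0∞) := ENNReal.tsum_add
    _ ≤ (∑' i, mu0 q k (G i)) + ε := add_le_add le_rfl hε'sum.le

lemma mu0_split {q : FinWord n → ℝ≥0∞} {k j : ℕ} (v : Word n j) (G : Set (InfWord n))
    (hjk : j ≤ k) :
    mu0 q k (G ∩ cylinder n v) + mu0 q k (G \ cylinder n v) ≤ mu0 q k G := by
  refine le_iInf fun A => le_iInf fun h1 => le_iInf fun h2 => ?_
  classical
  set A₁ : Set (FinWord n) := {u ∈ A | cylinder n u.2 ⊆ cylinder n v} with hA₁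
  have hsub : A₁ ⊆ A := Set.sep_subset _ _
  have cover1 : G ∩ cylinder n v ⊆ ⋃ u ∈ A₁, cylinder n u.2 := by
    rintro x ⟨hxG, hxv⟩
    obtain ⟨u, huA, hxu⟩ := Set.mem_iUnion₂.mp (h2 hxG)
    have hsubc : cylinder n u.2 ⊆ cylinder n v :=
      cylinder_subset_of_mem (hjk.trans (h1 u huA)) hxu hxv
    exact Set.mem_iUnion₂.mpr ⟨u, ⟨huA, hsubc⟩, hxu⟩
  have cover2 : G \ cylinder n v ⊆ ⋃ u ∈ A \ A₁, cylinder n u.2 := by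
    rintro x ⟨hxG, hxv⟩
    obtain ⟨u, huA, hxu⟩ := Set.mem_iUnion₂.mp (h2 hxG)
    refine Set.mem_iUnion₂.mpr ⟨u, ⟨huA, fun huA₁ => hxv (huA₁.2 hxu)⟩, hxu⟩
  calc mu0 q k (G ∩ cylinder n v) + mu0 q k (G \ cylinder n v)
      ≤ qSum q A₁ + qSum q (A \ A₁) :=
        add_le_add (mu0_le_of (fun u hu => h1 u (hsub hu)) cover1)
          (mu0_le_of (fun u hu => h1 u hu.1) cover2)
    _ = qSum q A := (qSum_split q hsub).symm

/-! ### The outer measure associated to a weight function -/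

/-- The set function `G ↦ sup_k inf over covers with words of length ≥ k`. -/
def nuF (P : FinWord n → ℝ≥0∞) (G : Set (InfWord n)) : ℝ≥0∞ := ⨆ k, mu0 P k G

lemma nuF_split (P : FinWord n → ℝ≥0∞) {j : ℕ} (v : Word n j) (G : Set (InfWord n)) :
    nuF P (G ∩ cylinder n v) + nuF P (G \ cylinder n v) ≤ nuF P G := by
  rw [nuF, nuF, ENNReal.iSup_add_iSup ?_]
  · refine iSup_le fun k => ?_
    calc mu0 P k (G ∩ cylinder n v) + mu0 P k (G \ cylinder n v)
        ≤ mu0 P (max k j) (G ∩ cylinder n v) + mu0 P (max k j) (G \ cylinder n v) :=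
          add_le_add (mu0_mono_k (le_max_left _ _)) (mu0_mono_k (le_max_left _ _))
      _ ≤ mu0 P (max k j) G := mu0_split v G (le_max_right _ _)
      _ ≤ ⨆ k', mu0 P k' G := le_iSup (fun k' => mu0 P k' G) (max k j)
  · intro k1 k2
    exact ⟨max k1 k2, add_le_add (mu0_mono_k (le_max_left _ _)) (mu0_mono_k (le_max_right _ _))⟩

/-- The associated outer measure. -/
def nuOM (P : FinWord n → ℝ≥0∞) : OuterMeasure (InfWord n) where
  measureOf := nuF P
  empty := by simp [nuF, mu0_empty]
  mono := fun h => iSup_mono fun k => mu0_mono_set h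
  iUnion_nat := fun G _ => by
    refine iSup_le fun k => ?_
    refine le_trans (mu0_iUnion_le P k G) (ENNReal.tsum_le_tsum fun i => ?_)
    exact le_iSup (fun k' => mu0 P k' (G i)) k

lemma nuOM_apply (P : FinWord n → ℝ≥0∞) (G : Set (InfWord n)) : nuOM P G = nuF P G := rfl

lemma cyl_carath (P : FinWord n → ℝ≥0∞) {j : ℕ} (v : Word n j) :
    MeasurableSet[(nuOM P).caratheodory] (cylinder n v) :=
  (OuterMeasure.isCaratheodory_iff_le _).mpr fun t => nuF_split P v t

lemma pi_le_carath (P : FinWord n → ℝ≥0∞) :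
    (inferInstance : MeasurableSpace (InfWord n)) ≤ (nuOM P).caratheodory := by
  have hone : ∀ (k : ℕ) (S : Set (Fin (n k))),
      MeasurableSet[(nuOM P).caratheodory] ((fun x : InfWord n => x k) ⁻¹' S) := by
    intro k S
    have hdec : (fun x : InfWord n => x k) ⁻¹' S =
        ⋃ (u : Word n (k + 1)) (_ : u (Fin.last k) ∈ S), cylinder n u := by
      ext x
      simp only [Set.mem_preimage, Set.mem_iUnion]
      constructor
      · intro hx
        refine ⟨wTake n x (k + 1), ?_, fun i => rfl⟩
        simpa [wTake] using hx
      · rintro ⟨u, hu, hxu⟩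
        have := hxu (Fin.last k)
        simp only [Fin.val_last] at this
        rw [this]; exact hu
    rw [hdec]
    exact MeasurableSet.iUnion fun u => MeasurableSet.iUnion fun _ => cyl_carath P u
  show (⨆ k, MeasurableSpace.comap (fun x : InfWord n => x k) inferInstance) ≤
    (nuOM P).caratheodory
  refine iSup_le fun k => ?_
  intro s hs
  rw [MeasurableSpace.measurableSet_comap] at hs
  obtain ⟨S, -, rfl⟩ := hs
  exact hone k S

/-- The measure associated to a weight function on finite words. -/
def muF (P : FinWord n → ℝ≥0∞) : Measure (InfWord n) := (nuOM P).toMeasure (pi_le_carath P)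

lemma muF_apply (P : FinWord n → ℝ≥0∞) {G : Set (InfWord n)} (hG : MeasurableSet G) :
    muF P G = nuF P G := toMeasure_apply _ _ hG

/-! ### Extension covers -/

/-- The set of all extensions of `v` by `r` more letters. -/
def extCover : (r : ℕ) → (j : ℕ) → Word n j → Set (FinWord n)
  | 0, j, v => {⟨j, v⟩}
  | (r + 1), j, v => ⋃ i : Fin (n j), extCover r (j + 1) (child v i)

lemma extCover_len : ∀ (r j : ℕ) (v : Word n j), ∀ w ∈ extCover r j v, w.1 = j + r := by
  intro r
  induction r with
  | zero => intro j v w hw; rw [Set.mem_singleton_iff.mp hw]; rfl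
  | succ r ih =>
    intro j v w hw
    obtain ⟨i, hi⟩ := Set.mem_iUnion.mp hw
    have := ih (j + 1) (child v i) w hi
    omega

lemma extCover_cover : ∀ (r j : ℕ) (v : Word n j),
    cylinder n v ⊆ ⋃ w ∈ extCover r j v, cylinder n w.2 := by
  intro r
  induction r with
  | zero =>
    intro j v x hx
    exact Set.mem_iUnion₂.mpr ⟨⟨j, v⟩, rfl, hx⟩
  | succ r ih =>
    intro j v x hx
    obtain ⟨w, hw, hxw⟩ := Set.mem_iUnion₂.mp (ih (j + 1) (child v (x j)) (mem_cylinder_child hx))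
    exact Set.mem_iUnion₂.mpr ⟨w, Set.mem_iUnion.mpr ⟨x j, hw⟩, hxw⟩

lemma extCover_subset : ∀ (r j : ℕ) (v : Word n j), ∀ w ∈ extCover r j v,
    cylinder n w.2 ⊆ cylinder n v := by
  intro r
  induction r with
  | zero =>
    intro j v w hw
    rw [Set.mem_singleton_iff.mp hw]
  | succ r ih =>
    intro j v w hw
    obtain ⟨i, hi⟩ := Set.mem_iUnion.mp hw
    exact (ih (j + 1) (child v i) w hi).trans (cylinder_child_subset v i)

lemma extCover_qSum (hn : ∀ k, 2 ≤ n k) (P : FinWord n → ℝ≥0∞)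
    (hP : ∀ (j : ℕ) (v : Word n j), ∑ i, P ⟨j + 1, child v i⟩ = P ⟨j, v⟩) :
    ∀ (r j : ℕ) (v : Word n j), qSum P (extCover r j v) = P ⟨j, v⟩ := by
  intro r
  induction r with
  | zero => intro j v; exact qSum_singleton P _
  | succ r ih =>
    intro j v
    have hdis : Pairwise (Function.onFun Disjoint fun i : Fin (n j) =>
        extCover r (j + 1) (child v i)) := by
      intro i i' hne
      rw [Function.onFun, Set.disjoint_left]
      intro w hwi hwi'
      obtain ⟨x, hx⟩ := cylinder_nonempty hn w.2
      have h1 : x ∈ cylinder n (child v i) := extCover_subset r (j + 1) (child v i) w hwi hx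
      have h2 : x ∈ cylinder n (child v i') := extCover_subset r (j + 1) (child v i') w hwi' hx
      have e1 : x j = i := by simpa using h1 (Fin.last j)
      have e2 : x j = i' := by simpa using h2 (Fin.last j)
      exact hne (by rw [← e1, e2])
    calc qSum P (extCover (r + 1) j v)
        = ∑ i, qSum P (extCover r (j + 1) (child v i)) := qSum_iUnion_disjoint P hdis
      _ = ∑ i, P ⟨j + 1, child v i⟩ := Finset.sum_congr rfl fun i _ => ih (j + 1) (child v i)
      _ = P ⟨j, v⟩ := hP j v

/-! ### Lower bound over arbitrary covers -/

/-- Key induction: a finite cover of `C_v` by cylinders of words of bounded length has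
`P`-sum at least `P v`, provided `P` is additive on children. -/
lemma cover_lb_aux (hn : ∀ k, 2 ≤ n k) (P : FinWord n → ℝ≥0∞)
    (hP : ∀ (j : ℕ) (v : Word n j), ∑ i, P ⟨j + 1, child v i⟩ = P ⟨j, v⟩) :
    ∀ (r j : ℕ) (v : Word n j) (F : Finset (FinWord n)),
      (∀ w ∈ F, j ≤ w.1 ∧ w.1 ≤ j + r) →
      (cylinder n v ⊆ ⋃ w ∈ F, cylinder n w.2) →
      P ⟨j, v⟩ ≤ ∑ w ∈ F, P w := by
  classical
  intro r
  induction r with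
  | zero =>
    intro j v F hF hcov
    obtain ⟨x, hx⟩ := cylinder_nonempty hn v
    obtain ⟨w, hwF, hxw⟩ := Set.mem_iUnion₂.mp (hcov hx)
    obtain ⟨K, u⟩ := w
    have hK : K = j := by
      have h12 : j ≤ K ∧ K ≤ j + 0 := hF ⟨K, u⟩ hwF
      omega
    subst hK
    have hu : u = v := word_eq_of_common_point hxw hx
    subst hu
    exact Finset.single_le_sum (fun w _ => (zero_le : 0 ≤ P w)) hwF
  | succ r ih =>
    intro j v F hF hcov
    by_cases hmem : (⟨j, v⟩ : FinWord n) ∈ F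
    · exact Finset.single_le_sum (fun w _ => (zero_le : 0 ≤ P w)) hmem
    -- every word of the cover meeting `C_v` is strictly longer than `j`
    have hlong : ∀ x ∈ cylinder n v, ∀ w ∈ F, x ∈ cylinder n w.2 → j + 1 ≤ w.1 := by
      intro x hxv w hwF hxw
      rcases Nat.lt_or_ge w.1 (j + 1) with hlt | hge
      · exfalso
        obtain ⟨K, u⟩ := w
        have hK : K = j := by
          have h12 : j ≤ K ∧ K ≤ j + (r + 1) := hF ⟨K, u⟩ hwF
          have hlt' : K < j + 1 := hlt
          omega
        subst hK
        have hu : u = v := word_eq_of_common_point hxw hxv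
        subst hu
        exact hmem hwF
      · exact hge
    set Fi : Fin (n j) → Finset (FinWord n) := fun i =>
      F.filter (fun w => j + 1 ≤ w.1 ∧ cylinder n w.2 ⊆ cylinder n (child v i)) with hFi
    have hchild : ∀ i : Fin (n j), P ⟨j + 1, child v i⟩ ≤ ∑ w ∈ Fi i, P w := by
      intro i
      refine ih (j + 1) (child v i) (Fi i) ?_ ?_
      · intro w hw
        rw [hFi, Finset.mem_filter] at hw
        refine ⟨hw.2.1, ?_⟩
        have := (hF w hw.1).2
        omega
      · intro x hxc
        have hxv : x ∈ cylinder n v := cylinder_child_subset v i hxc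
        obtain ⟨w, hwF, hxw⟩ := Set.mem_iUnion₂.mp (hcov hxv)
        have hge : j + 1 ≤ w.1 := hlong x hxv w hwF hxw
        have hxj : x j = i := by simpa using hxc (Fin.last j)
        have hsub : cylinder n w.2 ⊆ cylinder n (child v i) := by
          rw [← hxj]
          exact cylinder_subset_of_mem hge hxw (mem_cylinder_child hxv)
        refine Set.mem_iUnion₂.mpr ⟨w, ?_, hxw⟩
        rw [hFi, Finset.mem_filter]
        exact ⟨hwF, hge, hsub⟩
    have hdisj : (↑(Finset.univ : Finset (Fin (n j))) : Set (Fin (n j))).PairwiseDisjoint Fi := by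
      intro i _ i' _ hne
      simp only [Function.onFun]
      rw [Finset.disjoint_left]
      intro w hwi hwi'
      rw [hFi, Finset.mem_filter] at hwi hwi'
      obtain ⟨x, hx⟩ := cylinder_nonempty hn w.2
      have e1 : x j = i := by simpa using hwi.2.2 hx (Fin.last j)
      have e2 : x j = i' := by simpa using hwi'.2.2 hx (Fin.last j)
      exact hne (by rw [← e1, e2])
    calc P ⟨j, v⟩ = ∑ i, P ⟨j + 1, child v i⟩ := (hP j v).symm
      _ ≤ ∑ i, ∑ w ∈ Fi i, P w := Finset.sum_le_sum fun i _ => hchild i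
      _ = ∑ w ∈ Finset.univ.biUnion Fi, P w := (Finset.sum_biUnion hdisj).symm
      _ ≤ ∑ w ∈ F, P w := by
        refine Finset.sum_le_sum_of_subset ?_
        intro w hw
        obtain ⟨i, _, hwi⟩ := Finset.mem_biUnion.mp hw
        exact (Finset.mem_filter.mp hwi).1

/-- Any cover of the whole space by cylinders has `P`-sum at least the root weight. -/
lemma cover_lb (hn : ∀ k, 2 ≤ n k) (P : FinWord n → ℝ≥0∞)
    (hP : ∀ (j : ℕ) (v : Word n j), ∑ i, P ⟨j + 1, child v i⟩ = P ⟨j, v⟩)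
    (v0 : Word n 0) {A : Set (FinWord n)}
    (hcov : Set.univ ⊆ ⋃ u ∈ A, cylinder n u.2) : P ⟨0, v0⟩ ≤ qSum P A := by
  classical
  -- extract a finite subcover by compactness
  have hcov' : Set.univ ⊆ ⋃ u : A, cylinder n (u : FinWord n).2 := by
    intro x hx
    obtain ⟨u, hu, hxu⟩ := Set.mem_iUnion₂.mp (hcov hx)
    exact Set.mem_iUnion.mpr ⟨⟨u, hu⟩, hxu⟩
  obtain ⟨t, ht⟩ := isCompact_univ.elim_finite_subcover
    (fun u : A => cylinder n (u : FinWord n).2) (fun u => cylinder_isOpen _) hcov'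
  set F : Finset (FinWord n) := Finset.image (fun u : A => (u : FinWord n)) t with hF
  have hcovF : cylinder n v0 ⊆ ⋃ w ∈ F, cylinder n w.2 := by
    rw [cylinder_zero]
    intro x hx
    obtain ⟨u, hu, hxu⟩ := Set.mem_iUnion₂.mp (ht hx)
    exact Set.mem_iUnion₂.mpr ⟨(u : FinWord n), Finset.mem_image_of_mem (fun u : A => (u : FinWord n)) hu, hxu⟩
  set R : ℕ := F.sup (fun w => w.1) with hR
  have hlen : ∀ w ∈ F, 0 ≤ w.1 ∧ w.1 ≤ 0 + R := by
    intro w hw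
    exact ⟨Nat.zero_le _, by simpa [hR] using Finset.le_sup (f := fun w : FinWord n => w.1) hw⟩
  calc P ⟨0, v0⟩ ≤ ∑ w ∈ F, P w := cover_lb_aux hn P hP R 0 v0 F hlen hcovF
    _ = ∑ u ∈ t, P u := by
      rw [hF]
      exact Finset.sum_image fun x _ y _ h => Subtype.ext h
    _ ≤ ∑' u : A, P u := ENNReal.sum_le_tsum t
    _ = qSum P A := rfl

/-! ### The max-flow construction -/

/-- The capacity function: `q0` at levels `≥ k0`, `⊤` below. -/
def capF (q0 : FinWord n → ℝ≥0∞) (k0 j : ℕ) (v : Word n j) : ℝ≥0∞ :=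
  if k0 ≤ j then q0 ⟨j, v⟩ else ⊤

/-- The depth-`r` min-cut value below `v`. -/
def hcut (q0 : FinWord n → ℝ≥0∞) (k0 : ℕ) : (r : ℕ) → (j : ℕ) → Word n j → ℝ≥0∞
  | 0, j, v => capF q0 k0 j v
  | (r + 1), j, v => min (capF q0 k0 j v) (∑ i, hcut q0 k0 r (j + 1) (child v i))

lemma hcut_le_cap (q0 : FinWord n → ℝ≥0∞) (k0 r j : ℕ) (v : Word n j) :
    hcut q0 k0 r j v ≤ capF q0 k0 j v := by
  cases r with
  | zero => exact le_rfl
  | succ r => exact min_le_left _ _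

lemma hcut_ne_top (q0 : FinWord n → ℝ≥0∞) (hq0 : ∀ w, q0 w ≠ ⊤) (k0 : ℕ) :
    ∀ (r j : ℕ) (v : Word n j), k0 ≤ j + r → hcut q0 k0 r j v ≠ ⊤ := by
  intro r
  induction r with
  | zero =>
    intro j v hj
    have : k0 ≤ j := by omega
    simp only [hcut, capF, if_pos this]
    exact hq0 _
  | succ r ih =>
    intro j v hj
    by_cases hk0j : k0 ≤ j
    · refine ne_top_of_le_ne_top ?_ (min_le_left _ _)
      simp only [capF, if_pos hk0j]
      exact hq0 _
    · refine ne_top_of_le_ne_top ?_ (min_le_right _ _)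
      refine (ENNReal.sum_lt_top.mpr fun i _ => ?_).ne
      exact (ih (j + 1) (child v i) (by omega)).lt_top

/-- The min-cut dominates the cover premeasure of the cylinder. -/
lemma mu0_le_hcut (q0 : FinWord n → ℝ≥0∞) (k0 : ℕ) :
    ∀ (r j : ℕ) (v : Word n j), k0 ≤ j + r →
      mu0 q0 k0 (cylinder n v) ≤ hcut q0 k0 r j v := by
  have base : ∀ (j : ℕ) (v : Word n j), k0 ≤ j →
      mu0 q0 k0 (cylinder n v) ≤ q0 ⟨j, v⟩ := by
    intro j v hj
    have h := mu0_le_of (q := q0) (k := k0) (G := cylinder n v)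
      (A := {(⟨j, v⟩ : FinWord n)}) ?_ ?_
    · simpa [qSum_singleton] using h
    · intro u hu; rw [Set.mem_singleton_iff.mp hu]; exact hj
    · intro x hx
      exact Set.mem_iUnion₂.mpr ⟨⟨j, v⟩, rfl, hx⟩
  intro r
  induction r with
  | zero =>
    intro j v hj
    have hj' : k0 ≤ j := by omega
    simp only [hcut, capF, if_pos hj']
    exact base j v hj'
  | succ r ih =>
    intro j v hj
    refine le_min ?_ ?_
    · by_cases hk0j : k0 ≤ j
      · simp only [capF, if_pos hk0j]; exact base j v hk0j
      · simp only [capF, if_neg hk0j]; exact le_top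
    · calc mu0 q0 k0 (cylinder n v)
          ≤ mu0 q0 k0 (⋃ i : Fin (n j), cylinder n (child v i)) :=
            mu0_mono_set (cylinder_subset_iUnion_child v)
        _ ≤ ∑' i : Fin (n j), mu0 q0 k0 (cylinder n (child v i)) := mu0_iUnion_le _ _ _
        _ = ∑ i : Fin (n j), mu0 q0 k0 (cylinder n (child v i)) := tsum_fintype _
        _ ≤ ∑ i, hcut q0 k0 r (j + 1) (child v i) :=
            Finset.sum_le_sum fun i _ => ih (j + 1) (child v i) (by omega)

/-- The flow of depth `k`, distributing the min-cut value proportionally down the tree. -/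
def flowF (q0 : FinWord n → ℝ≥0∞) (k0 k : ℕ) : (j : ℕ) → Word n j → ℝ≥0∞
  | 0, v => hcut q0 k0 k 0 v
  | (j + 1), u =>
      hcut q0 k0 (k - (j + 1)) (j + 1) u *
        (flowF q0 k0 k j (wInit n u) /
          ∑ i, hcut q0 k0 (k - (j + 1)) (j + 1) (child (wInit n u) i))

lemma flow_le_hcut (q0 : FinWord n → ℝ≥0∞) (k0 k : ℕ) :
    ∀ (j : ℕ), j ≤ k → ∀ v : Word n j, flowF q0 k0 k j v ≤ hcut q0 k0 (k - j) j v := by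
  intro j
  induction j with
  | zero => intro _ v; simp [flowF]
  | succ j ih =>
    intro hjk u
    have hj : j ≤ k := by omega
    have hksub : k - j = (k - (j + 1)) + 1 := by omega
    have hF : flowF q0 k0 k j (wInit n u) ≤
        ∑ i, hcut q0 k0 (k - (j + 1)) (j + 1) (child (wInit n u) i) := by
      refine (ih hj (wInit n u)).trans ?_
      rw [hksub]
      exact min_le_right _ _
    calc flowF q0 k0 k (j + 1) u
        ≤ hcut q0 k0 (k - (j + 1)) (j + 1) u * 1 := by
          refine mul_le_mul_right ?_ _
          exact ENNReal.div_le_of_le_mul (by simpa using hF)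
      _ = hcut q0 k0 (k - (j + 1)) (j + 1) u := mul_one _

lemma flow_add (q0 : FinWord n → ℝ≥0∞) (hq0 : ∀ w, q0 w ≠ ⊤) (k0 k : ℕ) (hk0 : k0 ≤ k) :
    ∀ (j : ℕ), j + 1 ≤ k → ∀ v : Word n j,
      ∑ i, flowF q0 k0 k (j + 1) (child v i) = flowF q0 k0 k j v := by
  intro j hjk v
  have hwI : ∀ i : Fin (n j), wInit n (child v i) = v := fun i => wInit_child v i
  set S : ℝ≥0∞ := ∑ i, hcut q0 k0 (k - (j + 1)) (j + 1) (child v i) with hS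
  have hexp : ∀ i : Fin (n j), flowF q0 k0 k (j + 1) (child v i) =
      hcut q0 k0 (k - (j + 1)) (j + 1) (child v i) * (flowF q0 k0 k j v / S) := by
    intro i
    show hcut q0 k0 (k - (j + 1)) (j + 1) (child v i) *
        (flowF q0 k0 k j (wInit n (child v i)) /
          ∑ i', hcut q0 k0 (k - (j + 1)) (j + 1) (child (wInit n (child v i)) i')) = _
    rw [hwI i]
  have hFS : flowF q0 k0 k j v ≤ S := by
    refine (flow_le_hcut q0 k0 k j (by omega) v).trans ?_
    have hksub : k - j = (k - (j + 1)) + 1 := by omega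
    rw [hksub]
    exact min_le_right _ _
  rw [Finset.sum_congr rfl fun i _ => hexp i, ← Finset.sum_mul, ← hS]
  by_cases hS0 : S = 0
  · have hF0 : flowF q0 k0 k j v = 0 := le_antisymm (le_trans hFS (le_of_eq hS0)) zero_le
    rw [hS0, hF0]
    simp
  · have hStop : S ≠ ⊤ := by
      rw [hS]
      refine (ENNReal.sum_lt_top.mpr fun i _ => ?_).ne
      exact (hcut_ne_top q0 hq0 k0 (k - (j + 1)) (j + 1) (child v i) (by omega)).lt_top
    exact ENNReal.mul_div_cancel hS0 hStop

/-- Total cap-sum at level `k0` (recursively). -/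
def capSum (q0 : FinWord n → ℝ≥0∞) (k0 : ℕ) : (r : ℕ) → (j : ℕ) → Word n j → ℝ≥0∞
  | 0, j, v => capF q0 k0 j v
  | (r + 1), j, v => ∑ i, capSum q0 k0 r (j + 1) (child v i)

lemma hcut_le_capSum (q0 : FinWord n → ℝ≥0∞) (k0 : ℕ) :
    ∀ (r' r j : ℕ) (v : Word n j), r' ≤ r → hcut q0 k0 r j v ≤ capSum q0 k0 r' j v := by
  intro r'
  induction r' with
  | zero => intro r j v _; exact hcut_le_cap q0 k0 r j v
  | succ r' ih =>
    intro r j v hr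
    obtain ⟨rr, rfl⟩ : ∃ rr, r = rr + 1 := ⟨r - 1, by omega⟩
    calc hcut q0 k0 (rr + 1) j v ≤ ∑ i, hcut q0 k0 rr (j + 1) (child v i) := min_le_right _ _
      _ ≤ ∑ i, capSum q0 k0 r' (j + 1) (child v i) :=
          Finset.sum_le_sum fun i _ => ih rr (j + 1) (child v i) (by omega)
      _ = capSum q0 k0 (r' + 1) j v := rfl

lemma capSum_ne_top (q0 : FinWord n → ℝ≥0∞) (hq0 : ∀ w, q0 w ≠ ⊤) (k0 : ℕ) :
    ∀ (r j : ℕ) (v : Word n j), k0 ≤ j + r → capSum q0 k0 r j v ≠ ⊤ := by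
  intro r
  induction r with
  | zero =>
    intro j v hj
    have : k0 ≤ j := by omega
    simp only [capSum, capF, if_pos this]
    exact hq0 _
  | succ r ih =>
    intro j v hj
    refine (ENNReal.sum_lt_top.mpr fun i _ => ?_).ne
    exact (ih (j + 1) (child v i) (by omega)).lt_top

/-! ### Ultrafilter limits -/

lemma exists_ulim (f : ℕ → ℝ≥0∞) :
    ∃ a, Tendsto f (Ultrafilter.of (atTop : Filter ℕ) : Filter ℕ) (𝓝 a) := by
  obtain ⟨a, -, ha⟩ := (isCompact_univ (X := ℝ≥0∞)).ultrafilter_le_nhds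
    ((Ultrafilter.of (atTop : Filter ℕ)).map f) (by simp [le_principal_iff])
  exact ⟨a, ha⟩

/-- A limit of `f` along a fixed ultrafilter extending `atTop`. -/
def ulim (f : ℕ → ℝ≥0∞) : ℝ≥0∞ := Classical.choose (exists_ulim f)

lemma ulim_spec (f : ℕ → ℝ≥0∞) :
    Tendsto f (Ultrafilter.of (atTop : Filter ℕ) : Filter ℕ) (𝓝 (ulim f)) :=
  Classical.choose_spec (exists_ulim f)

lemma eventually_ultra {p : ℕ → Prop} (N : ℕ) (h : ∀ k, N ≤ k → p k) :
    ∀ᶠ k in (Ultrafilter.of (atTop : Filter ℕ) : Filter ℕ), p k :=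
  (eventually_atTop.mpr ⟨N, h⟩).filter_mono (Ultrafilter.of_le _)

/-! ### Positivity of the singular value function -/

lemma sv_nonneg (d : ℕ) (M : Matrix (Fin d) (Fin d) ℝ) (m : ℕ) : 0 ≤ sv d M m := by
  unfold sv
  split
  · exact Real.sqrt_nonneg _
  · exact le_rfl

lemma phi_nonneg (d : ℕ) (M : Matrix (Fin d) (Fin d) ℝ) (s : ℝ) : 0 ≤ phi d M s := by
  unfold phi
  split
  · exact zero_le_one
  split
  · exact mul_nonneg (Finset.prod_nonneg fun i _ => sv_nonneg d M i)
      (Real.rpow_nonneg (sv_nonneg d M _) _)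
  · exact Real.rpow_nonneg (Finset.prod_nonneg fun i _ => sv_nonneg d M i) _

open Matrix in
lemma sv_pos {d : ℕ} {M : Matrix (Fin d) (Fin d) ℝ} (hdet : M.det ≠ 0) {m : ℕ} (hm : m < d) :
    0 < sv d M m := by
  have hU : IsUnit M := (Matrix.isUnit_iff_isUnit_det M).mpr (isUnit_iff_ne_zero.mpr hdet)
  have hPD : (Mᴴ * M).PosDef := by
    refine Matrix.PosDef.of_dotProduct_mulVec_pos (Matrix.isHermitian_conjTranspose_mul_self M) fun x hx => ?_
    have hMx : M *ᵥ x ≠ 0 := by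
      intro h
      have hinj := Matrix.mulVec_injective_iff_isUnit.mpr hU
      exact hx (hinj (by rw [h, Matrix.mulVec_zero]))
    have hrw : star x ⬝ᵥ ((Mᴴ * M) *ᵥ x) = star (M *ᵥ x) ⬝ᵥ (M *ᵥ x) := by
      rw [← Matrix.mulVec_mulVec, Matrix.dotProduct_mulVec, Matrix.vecMul_conjTranspose,
        star_star]
    rw [hrw]
    exact Matrix.dotProduct_star_self_pos_iff.mpr hMx
  unfold sv
  rw [dif_pos hm]
  exact Real.sqrt_pos.mpr (hPD.eigenvalues_pos _)

open Matrix in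
lemma phi_pos {d : ℕ} (hd : 1 ≤ d) {M : Matrix (Fin d) (Fin d) ℝ} (hdet : M.det ≠ 0)
    (s : ℝ) : 0 < phi d M s := by
  unfold phi
  split
  · exact one_pos
  next hs0 =>
  have hs0' : 0 < s := lt_of_not_ge hs0
  split
  next hsd =>
    have hceil : ⌈s⌉₊ ≤ d := Nat.ceil_le.mpr hsd
    have hceil1 : 1 ≤ ⌈s⌉₊ := Nat.one_le_ceil_iff.mpr hs0'
    refine mul_pos (Finset.prod_pos fun i hi => ?_) (Real.rpow_pos_of_pos (sv_pos hdet ?_) _)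
    · refine sv_pos hdet ?_
      have := Finset.mem_range.mp hi
      omega
    · omega
  · exact Real.rpow_pos_of_pos (Finset.prod_pos fun i hi => sv_pos hdet (Finset.mem_range.mp hi)) _

lemma Tword_det_ne {d : ℕ} (n : ℕ → ℕ) (T : ∀ k : ℕ, Fin (n k) → Matrix (Fin d) (Fin d) ℝ)
    (hdet : ∀ (k : ℕ) (j : Fin (n k)), (T k j).det ≠ 0) {k : ℕ} (u : Word n k) :
    (Tword n T u).det ≠ 0 := by
  have h := MonoidHom.map_list_prod (Matrix.detMonoidHom)
    (List.ofFn fun i : Fin k => T i (u i))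
  simp only [Matrix.coe_detMonoidHom] at h
  rw [Tword, h]
  refine List.prod_ne_zero fun h0 => ?_
  obtain ⟨M, hM, hM0⟩ := List.mem_map.mp h0
  obtain ⟨i, rfl⟩ := List.mem_ofFn.mp hM
  exact hdet i (u i) hM0

end FrostmanAux

/-- **Lemma (Frostman-type measure on the symbolic space).**
Fix `s ≥ 0` and suppose `M^s(Σ^∞) > 0`. Then there exist a Borel measure `μ` on `Σ^∞` with
`0 < μ(Σ^∞) < ∞` and a constant `c > 0` such that `μ(C_u) ≤ c·φ^s(T_u)` for every `u ∈ Σ^*`. -/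
theorem exists_frostman_measure (d : ℕ) (hd : 1 ≤ d) (n : ℕ → ℕ) (hn : ∀ k, 2 ≤ n k)
    (T : ∀ k : ℕ, Fin (n k) → Matrix (Fin d) (Fin d) ℝ) (hT : GoodMatrices n T)
    (s : ℝ) (hs : 0 ≤ s) (hpos : 0 < Mnet n T s univ) :
    ∃ μ : Measure (InfWord n), 0 < μ univ ∧ μ univ < ⊤ ∧
      ∃ c : ℝ, 0 < c ∧ ∀ (k : ℕ) (u : Word n k),
        μ (cylinder n u) ≤ ENNReal.ofReal (c * phi d (Tword n T u) s) := by
  classical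
  -- Choose a level `k0` at which the premeasure of the whole space is positive.
  obtain ⟨k0, hk0⟩ : ∃ k, 0 < Mk n T s k Set.univ := by
    by_contra h
    push_neg at h
    simp only [le_zero_iff] at h
    have hz : Mnet n T s Set.univ = 0 := by
      rw [Mnet]
      simp [h]
    rw [hz] at hpos
    exact lt_irrefl 0 hpos
  set q0 : FinWord n → ℝ≥0∞ := fun w => ENNReal.ofReal (phi d (Tword n T w.2) s) with hq0def
  have hq0top : ∀ w, q0 w ≠ ⊤ := fun w => ENNReal.ofReal_ne_top
  have hMk_eq : ∀ (k : ℕ) (G : Set (InfWord n)), Mk n T s k G = mu0 q0 k G := fun k G => rfl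
  set v0 : Word n 0 := fun i => i.elim0 with hv0
  -- The limit weights along an ultrafilter.
  set p : ∀ j : ℕ, Word n j → ℝ≥0∞ := fun j v => ulim (fun k => flowF q0 k0 k j v) with hp
  set P : FinWord n → ℝ≥0∞ := fun w => p w.1 w.2 with hPdef
  have hPtend : ∀ (j : ℕ) (v : Word n j),
      Tendsto (fun k => flowF q0 k0 k j v)
        (Ultrafilter.of (atTop : Filter ℕ) : Filter ℕ) (𝓝 (p j v)) :=
    fun j v => ulim_spec _
  have hadd : ∀ (j : ℕ) (v : Word n j), ∑ i, P ⟨j + 1, child v i⟩ = P ⟨j, v⟩ := by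
    intro j v
    have h1 : Tendsto (fun k => ∑ i, flowF q0 k0 k (j + 1) (child v i))
        (Ultrafilter.of (atTop : Filter ℕ) : Filter ℕ)
        (𝓝 (∑ i, p (j + 1) (child v i))) :=
      tendsto_finset_sum _ fun i _ => hPtend (j + 1) (child v i)
    have h2 : ∀ᶠ k in (Ultrafilter.of (atTop : Filter ℕ) : Filter ℕ),
        ∑ i, flowF q0 k0 k (j + 1) (child v i) = flowF q0 k0 k j v :=
      eventually_ultra (max (j + 1) k0) fun k hk =>
        flow_add q0 hq0top k0 k (le_trans (le_max_right _ _) hk) j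
          (le_trans (le_max_left _ _) hk) v
    exact tendsto_nhds_unique (h1.congr' h2) (hPtend j v)
  have hcap : ∀ (j : ℕ) (v : Word n j), k0 ≤ j → p j v ≤ q0 ⟨j, v⟩ := by
    intro j v hj
    refine le_of_tendsto (hPtend j v) (eventually_ultra j fun k hk => ?_)
    refine (flow_le_hcut q0 k0 k j hk v).trans ?_
    refine (hcut_le_cap q0 k0 (k - j) j v).trans ?_
    rw [capF, if_pos hj]
  have hroot_ge : Mk n T s k0 Set.univ ≤ p 0 v0 := by
    refine ge_of_tendsto (hPtend 0 v0) (eventually_ultra k0 fun k hk => ?_)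
    rw [hMk_eq]
    have huniv : (Set.univ : Set (InfWord n)) = cylinder n v0 := (cylinder_zero v0).symm
    rw [huniv]
    exact mu0_le_hcut q0 k0 k 0 v0 (by omega)
  set Mtop : ℝ≥0∞ := capSum q0 k0 k0 0 v0 with hMtop
  have hMtop_ne : Mtop ≠ ⊤ := capSum_ne_top q0 hq0top k0 k0 0 v0 (by omega)
  have hroot_le : p 0 v0 ≤ Mtop := by
    refine le_of_tendsto (hPtend 0 v0) (eventually_ultra k0 fun k hk => ?_)
    exact hcut_le_capSum q0 k0 k0 k 0 v0 hk
  -- The measure.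
  set μ : Measure (InfWord n) := muF P with hμ
  have hμcyl : ∀ (j : ℕ) (v : Word n j), μ (cylinder n v) ≤ P ⟨j, v⟩ := by
    intro j v
    rw [hμ, muF_apply P (cylinder_measurableSet v)]
    refine iSup_le fun k => ?_
    have h1 : ∀ w ∈ extCover (max k j - j) j v, k ≤ w.1 := by
      intro w hw
      rw [extCover_len _ _ _ w hw]
      omega
    calc mu0 P k (cylinder n v) ≤ qSum P (extCover (max k j - j) j v) :=
          mu0_le_of h1 (extCover_cover _ j v)
      _ = P ⟨j, v⟩ := extCover_qSum hn P hadd _ j v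
  have hμuniv_le : μ Set.univ ≤ Mtop := by
    have h := hμcyl 0 v0
    rw [cylinder_zero v0] at h
    exact h.trans hroot_le
  have hμuniv_ge : Mk n T s k0 Set.univ ≤ μ Set.univ := by
    rw [hμ, muF_apply P MeasurableSet.univ]
    refine hroot_ge.trans ?_
    refine le_trans ?_ (le_iSup (fun k => mu0 P k Set.univ) 0)
    exact le_iInf fun A => le_iInf fun h1 => le_iInf fun h2 => cover_lb hn P hadd v0 h2
  -- The constant handling the finitely many short levels.
  have hphi_pos : ∀ (j : ℕ) (v : Word n j), 0 < phi d (Tword n T v) s := fun j v =>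
    phi_pos hd (Tword_det_ne n T hT.1 v) s
  have hshort : ∀ m : ℕ, ∃ c' : ℝ, 0 ≤ c' ∧ ∀ j < m, ∀ v : Word n j,
      Mtop.toReal ≤ c' * phi d (Tword n T v) s := by
    intro m
    induction m with
    | zero => exact ⟨0, le_rfl, fun j hj => absurd hj (Nat.not_lt_zero j)⟩
    | succ m ihm =>
      obtain ⟨c₁, hc₁0, hc₁⟩ := ihm
      have hne : (Finset.univ : Finset (Word n m)).Nonempty := by
        refine ⟨fun i => ⟨0, ?_⟩, Finset.mem_univ _⟩
        have := hn i
        omega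
      set c₂ : ℝ := Finset.univ.sup' hne
        (fun v : Word n m => Mtop.toReal / phi d (Tword n T v) s) with hc₂
      refine ⟨max c₁ (max c₂ 0), le_trans hc₁0 (le_max_left _ _), ?_⟩
      intro j hj v
      rcases Nat.lt_or_ge j m with hjm | hjm
      · refine (hc₁ j hjm v).trans ?_
        exact mul_le_mul_of_nonneg_right (le_max_left _ _) (phi_nonneg d _ s)
      · have hjm' : j = m := by omega
        subst hjm'
        have h1 : Mtop.toReal =
            (Mtop.toReal / phi d (Tword n T v) s) * phi d (Tword n T v) s :=
          (div_mul_cancel₀ _ (hphi_pos j v).ne').symm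
        rw [h1]
        refine mul_le_mul_of_nonneg_right ?_ (phi_nonneg d _ s)
        refine le_trans ?_ (le_trans (le_max_left c₂ 0) (le_max_right c₁ _))
        rw [hc₂]
        exact Finset.le_sup' (fun v' : Word n j => Mtop.toReal / phi d (Tword n T v') s)
          (Finset.mem_univ v)
  obtain ⟨c', hc'0, hc'⟩ := hshort k0
  refine ⟨μ, lt_of_lt_of_le hk0 hμuniv_ge, lt_of_le_of_lt hμuniv_le hMtop_ne.lt_top,
    max 1 c', lt_of_lt_of_le one_pos (le_max_left _ _), ?_⟩
  intro k u
  by_cases hkk0 : k0 ≤ k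
  · refine (hμcyl k u).trans ?_
    refine (hcap k u hkk0).trans ?_
    refine ENNReal.ofReal_le_ofReal ?_
    exact le_mul_of_one_le_left (phi_nonneg d _ s) (le_max_left _ _)
  · have h1 : μ (cylinder n u) ≤ Mtop := le_trans (measure_mono (Set.subset_univ _)) hμuniv_le
    refine h1.trans ?_
    rw [← ENNReal.ofReal_toReal hMtop_ne]
    refine ENNReal.ofReal_le_ofReal ?_
    refine (hc' k (by omega) u).trans ?_
    exact mul_le_mul_of_nonneg_right (le_max_right _ _) (phi_nonneg d _ s)

end MoranPaper
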